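/- There exist a constant C > 0 and b₀ > 1 such that for all b ≥ b₀ and uniformly for all indices 0 ≤ i < L, the omitted area at the extreme points satisfies X(q̃_i, ũ_i) ≤ C/(b·(log b)³). -/

import Mathlib

open MeasureTheory Real Set
open scoped ENNReal

noncomputable section

/-- The Euclidean plane ℝ². -/
abbrev Plane := EuclideanSpace ℝ (Fin 2)

/-- The point in the plane with Cartesian coordinates `(x, y)`. -/
def pt (x y : ℝ) : Plane := (WithLp.equiv 2 (Fin 2 → ℝ)).symm ![x, y]

/-- `D p r` is the closed disk of radius `r` centered at `p`. -/
def D (p : Plane) (r : ℝ) : Set Plane := Metric.closedBall p r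

/-- `X o q u` is the area of `D₁(o) \ (D₁(q) ∪ D₁(u))` (Lebesgue measure). -/
def X (o q u : Plane) : ℝ := (volume (D o 1 \ (D q 1 ∪ D u 1))).toReal

/-- `L = ⌊b^(1/3) (log b)²⌋`. -/
def L (b : ℝ) : ℕ := ⌊b ^ (1/3 : ℝ) * (Real.log b) ^ 2⌋₊

/-- `δ = 1/(b^(1/3) log b)`. -/
def δ (b : ℝ) : ℝ := 1 / (b ^ (1/3 : ℝ) * Real.log b)

/-- `θb = π / L`. -/
def θb (b : ℝ) : ℝ := Real.pi / L b

/-- The point with polar coordinates `(r, θ)` relative to `o`. -/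
def polarPt (o : Plane) (r θ : ℝ) : Plane := o + r • pt (Real.cos θ) (Real.sin θ)

/-- The sector `Q_i` of the disk `D_δ(o)`: points with polar coordinates `(r, θ)` relative
to `o` satisfying `0 < r ≤ δ` and `(i - 1/2)θ_b ≤ θ ≤ (i + 1/2)θ_b`. -/
def Qsector (o : Plane) (b : ℝ) (i : ℕ) : Set Plane :=
  {p | ∃ r θ : ℝ, 0 < r ∧ r ≤ δ b ∧
    ((i : ℝ) - 1/2) * θb b ≤ θ ∧ θ ≤ ((i : ℝ) + 1/2) * θb b ∧ p = polarPt o r θ}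

/-- The sector `R_i`, the reflection of `Q_i` through `o`: points with polar coordinates
`(r, θ)` relative to `o` satisfying `0 < r ≤ δ` and `(i - 1/2)θ_b ≤ θ - π ≤ (i + 1/2)θ_b`. -/
def Rsector (o : Plane) (b : ℝ) (i : ℕ) : Set Plane :=
  {p | ∃ r θ : ℝ, 0 < r ∧ r ≤ δ b ∧
    ((i : ℝ) - 1/2) * θb b ≤ θ - Real.pi ∧ θ - Real.pi ≤ ((i : ℝ) + 1/2) * θb b ∧
    p = polarPt o r θ}

/-- The extreme point `q̃_i`, with polar coordinates `(δ, (i - 1/2)θ_b)` relative to `o`. -/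
def qtil (o : Plane) (b : ℝ) (i : ℕ) : Plane := polarPt o (δ b) (((i : ℝ) - 1/2) * θb b)

/-- The extreme point `ũ_i`, with polar coordinates `(δ, (i + 1/2)θ_b + π)` relative to `o`. -/
def util (o : Plane) (b : ℝ) (i : ℕ) : Plane :=
  polarPt o (δ b) (((i : ℝ) + 1/2) * θb b + Real.pi)

@[simp] lemma pt_apply_zero (x y : ℝ) : pt x y 0 = x := rfl
@[simp] lemma pt_apply_one (x y : ℝ) : pt x y 1 = y := rfl

lemma Plane.ext' {p q : Plane} (h0 : p 0 = q 0) (h1 : p 1 = q 1) : p = q := by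
  ext i
  fin_cases i
  · exact h0
  · exact h1

lemma polarPt_apply_zero (o : Plane) (r θ : ℝ) :
    polarPt o r θ 0 = o 0 + r * Real.cos θ := by
  simp [polarPt, PiLp.add_apply, PiLp.smul_apply, smul_eq_mul]

lemma polarPt_apply_one (o : Plane) (r θ : ℝ) :
    polarPt o r θ 1 = o 1 + r * Real.sin θ := by
  simp [polarPt, PiLp.add_apply, PiLp.smul_apply, smul_eq_mul]

def rotIso (ψ : ℝ) : Plane ≃ₗᵢ[ℝ] Plane where
  toLinearEquiv :=
  { toFun := fun p => pt (Real.cos ψ * p 0 - Real.sin ψ * p 1)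
      (Real.sin ψ * p 0 + Real.cos ψ * p 1)
    invFun := fun p => pt (Real.cos ψ * p 0 + Real.sin ψ * p 1)
      (-Real.sin ψ * p 0 + Real.cos ψ * p 1)
    map_add' := by
      intro p q
      apply Plane.ext' <;> simp [PiLp.add_apply] <;> ring
    map_smul' := by
      intro r p
      apply Plane.ext' <;> simp [PiLp.smul_apply, smul_eq_mul] <;> ring
    left_inv := by
      intro p
      have h := Real.sin_sq_add_cos_sq ψ
      apply Plane.ext' <;> simp
      · linear_combination p 0 * h
      · linear_combination p 1 * h
    right_inv := by
      intro p
      have h := Real.sin_sq_add_cos_sq ψ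
      apply Plane.ext' <;> simp
      · linear_combination p 0 * h
      · linear_combination p 1 * h }
  norm_map' := by
    intro p
    have h := Real.sin_sq_add_cos_sq ψ
    simp only [EuclideanSpace.norm_eq, Fin.sum_univ_two, Real.norm_eq_abs, sq_abs]
    congr 1
    simp only [LinearEquiv.coe_mk, LinearMap.coe_mk, AddHom.coe_mk, pt_apply_zero, pt_apply_one]
    ring_nf
    nlinarith [h]

@[simp] lemma rotIso_symm_apply (ψ : ℝ) (p : Plane) :
    (rotIso ψ).symm p = pt (Real.cos ψ * p 0 + Real.sin ψ * p 1)
      (-Real.sin ψ * p 0 + Real.cos ψ * p 1) := rfl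

lemma measurableSet_pibox (a₁ b₁ a₂ b₂ : ℝ) :
    MeasurableSet {f : Fin 2 → ℝ | f 0 ∈ Icc a₁ b₁ ∧ f 1 ∈ Icc a₂ b₂} :=
  ((measurable_pi_apply 0) measurableSet_Icc).inter ((measurable_pi_apply 1) measurableSet_Icc)

lemma box_eq (a₁ b₁ a₂ b₂ : ℝ) :
    {z : Plane | z 0 ∈ Icc a₁ b₁ ∧ z 1 ∈ Icc a₂ b₂}
      = (MeasurableEquiv.toLp 2 (Fin 2 → ℝ)).symm ⁻¹'
        {f : Fin 2 → ℝ | f 0 ∈ Icc a₁ b₁ ∧ f 1 ∈ Icc a₂ b₂} := rfl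

lemma measurableSet_box (a₁ b₁ a₂ b₂ : ℝ) :
    MeasurableSet {z : Plane | z 0 ∈ Icc a₁ b₁ ∧ z 1 ∈ Icc a₂ b₂} := by
  rw [box_eq]
  exact (MeasurableEquiv.toLp 2 (Fin 2 → ℝ)).symm.measurable (measurableSet_pibox _ _ _ _)

lemma volume_pibox (a₁ b₁ a₂ b₂ : ℝ) :
    volume {f : Fin 2 → ℝ | f 0 ∈ Icc a₁ b₁ ∧ f 1 ∈ Icc a₂ b₂}
      = ENNReal.ofReal (b₁ - a₁) * ENNReal.ofReal (b₂ - a₂) := by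
  have h : {f : Fin 2 → ℝ | f 0 ∈ Icc a₁ b₁ ∧ f 1 ∈ Icc a₂ b₂}
      = Set.univ.pi ![Icc a₁ b₁, Icc a₂ b₂] := by
    ext f
    simp [Fin.forall_fin_two]
  rw [h, volume_pi_pi, Fin.prod_univ_two]
  simp [Real.volume_Icc]

lemma volume_box (a₁ b₁ a₂ b₂ : ℝ) :
    volume {z : Plane | z 0 ∈ Icc a₁ b₁ ∧ z 1 ∈ Icc a₂ b₂}
      = ENNReal.ofReal (b₁ - a₁) * ENNReal.ofReal (b₂ - a₂) := by
  rw [box_eq, (EuclideanSpace.volume_preserving_symm_measurableEquiv_toLp (Fin 2)).measure_preimage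
    (measurableSet_pibox a₁ b₁ a₂ b₂).nullMeasurableSet, volume_pibox]

lemma dist_sq (p q : Plane) :
    dist p q ^ 2 = (p 0 - q 0) ^ 2 + (p 1 - q 1) ^ 2 := by
  rw [EuclideanSpace.dist_eq, Real.sq_sqrt (by positivity)]
  simp [Fin.sum_univ_two, Real.dist_eq, sq_abs]

set_option maxHeartbeats 1600000 in
lemma key_alg (δ cψ sψ c s Xc Yc x y : ℝ)
    (hψ : sψ ^ 2 + cψ ^ 2 = 1) (hcs : s ^ 2 + c ^ 2 = 1)
    (hδ0 : 0 < δ) (hδs : δ ≤ 1 / 100)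
    (hs0 : 0 ≤ s) (hs : s ≤ δ / 2) (hc : 1 / 2 ≤ c)
    (hx : x = cψ * Xc + sψ * Yc) (hy : y = -(sψ * Xc) + cψ * Yc)
    (hXY : Xc ^ 2 + Yc ^ 2 ≤ 1)
    (hA : 1 < (Xc - δ * (cψ * c + sψ * s)) ^ 2 + (Yc - δ * (sψ * c - cψ * s)) ^ 2)
    (hB : 1 < (Xc + δ * (cψ * c - sψ * s)) ^ 2 + (Yc + δ * (sψ * c + cψ * s)) ^ 2) :
    (-(2 * δ) ≤ x ∧ x ≤ 2 * δ) ∧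
      ((1 - 10 * δ ^ 2 ≤ y ∧ y ≤ 1) ∨ (-1 ≤ y ∧ y ≤ -(1 - 10 * δ ^ 2))) := by
  have hxy : x ^ 2 + y ^ 2 = Xc ^ 2 + Yc ^ 2 := by
    linear_combination (x + (cψ * Xc + sψ * Yc)) * hx + (y + (-(sψ * Xc) + cψ * Yc)) * hy
      + (Xc ^ 2 + Yc ^ 2) * hψ
  have eA : (Xc - δ * (cψ * c + sψ * s)) ^ 2 + (Yc - δ * (sψ * c - cψ * s)) ^ 2
      = Xc ^ 2 + Yc ^ 2 + δ ^ 2 - 2 * δ * (x * c - y * s) := by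
    linear_combination (δ ^ 2 * (s ^ 2 + c ^ 2)) * hψ + δ ^ 2 * hcs
      + 2 * δ * c * hx - 2 * δ * s * hy
  have eB : (Xc + δ * (cψ * c - sψ * s)) ^ 2 + (Yc + δ * (sψ * c + cψ * s)) ^ 2
      = Xc ^ 2 + Yc ^ 2 + δ ^ 2 + 2 * δ * (x * c + y * s) := by
    linear_combination (δ ^ 2 * (s ^ 2 + c ^ 2)) * hψ + δ ^ 2 * hcs
      - 2 * δ * c * hx - 2 * δ * s * hy
  rw [eA] at hA
  rw [eB] at hB
  clear eA eB hx hy hψ hcs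
  have h2δ : (0:ℝ) < 2 * δ := by linarith
  have hu2 : 2 * δ * (x * c - y * s) < δ ^ 2 := by linarith
  have hv2 : -(δ ^ 2) < 2 * δ * (x * c + y * s) := by linarith
  have hδδ : δ ^ 2 / (2 * δ) = δ / 2 := by field_simp
  have hu : x * c - y * s < δ / 2 := by
    have h := (lt_div_iff₀' h2δ).mpr hu2
    rwa [hδδ] at h
  have hv : -(δ / 2) < x * c + y * s := by
    have h' : 2 * δ * (-(x * c + y * s)) < δ ^ 2 := by linarith
    have h := (lt_div_iff₀' h2δ).mpr h'
    rw [hδδ] at h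
    linarith
  have hlow : 1 - 4 * δ ^ 2 < x ^ 2 + y ^ 2 := by
    have h1 : -(3 * δ / 2) < x * c - y * s := by
      have hyabs : -1 ≤ y ∧ y ≤ 1 := by
        constructor <;> nlinarith [sq_nonneg x, sq_nonneg (y + 1), sq_nonneg (y - 1), hxy, hXY]
      have hys1 : y * s ≤ s := by nlinarith [mul_le_mul_of_nonneg_right hyabs.2 hs0]
      have hxc : -δ < x * c := by linarith
      linarith
    have h2 := mul_lt_mul_of_pos_left h1 h2δ
    nlinarith [hA, h2, hxy]
  clear hA hB hu2 hv2
  have hxys : x ^ 2 + y ^ 2 ≤ 1 := by linarith [hxy, hXY]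
  have hy1 : y ≤ 1 := by nlinarith [sq_nonneg x, sq_nonneg (y - 1)]
  have hym1 : -1 ≤ y := by nlinarith [sq_nonneg x, sq_nonneg (y + 1)]
  have hys_ub : y * s ≤ s := by nlinarith [mul_le_mul_of_nonneg_right hy1 hs0]
  have hys_lb : -s ≤ y * s := by nlinarith [mul_le_mul_of_nonneg_right hym1 hs0]
  have hxc_ub : x * c < δ := by linarith
  have hxc_lb : -δ < x * c := by linarith
  have hxub : x ≤ 2 * δ := by
    rcases le_or_gt x 0 with h | h
    · linarith
    · nlinarith [mul_le_mul_of_nonneg_left hc h.le]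
  have hxlb : -(2 * δ) ≤ x := by
    rcases le_or_gt 0 x with h | h
    · linarith
    · nlinarith [mul_le_mul_of_nonneg_left hc (by linarith : (0:ℝ) ≤ -x)]
  refine ⟨⟨hxlb, hxub⟩, ?_⟩
  have hxsq : x ^ 2 ≤ 4 * δ ^ 2 := by
    nlinarith [mul_nonneg (by linarith : (0:ℝ) ≤ 2 * δ - x) (by linarith : (0:ℝ) ≤ 2 * δ + x)]
  have hy2 : 1 - 8 * δ ^ 2 < y ^ 2 := by linarith
  have hδ2 : δ ^ 2 ≤ 1 / 10000 := by nlinarith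
  have h10 : (0:ℝ) < 1 - 10 * δ ^ 2 := by nlinarith
  have hδ4 : δ ^ 2 * δ ^ 2 ≤ (1 / 10000) * δ ^ 2 := mul_le_mul_of_nonneg_right hδ2 (sq_nonneg δ)
  rcases le_or_gt 0 y with h | h
  · refine Or.inl ⟨?_, hy1⟩
    by_contra hcon
    push_neg at hcon
    have t1 : y * y ≤ y * (1 - 10 * δ ^ 2) := mul_le_mul_of_nonneg_left hcon.le h
    have t2 : y * (1 - 10 * δ ^ 2) < (1 - 10 * δ ^ 2) * (1 - 10 * δ ^ 2) :=
      mul_lt_mul_of_pos_right hcon h10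
    nlinarith [t1, t2, hy2, hδ4]
  · refine Or.inr ⟨hym1, ?_⟩
    by_contra hcon
    push_neg at hcon
    have hny : (0:ℝ) ≤ -y := by linarith
    have hny' : -y < 1 - 10 * δ ^ 2 := by linarith
    have t1 : (-y) * (-y) ≤ (-y) * (1 - 10 * δ ^ 2) := mul_le_mul_of_nonneg_left hny'.le hny
    have t2 : (-y) * (1 - 10 * δ ^ 2) < (1 - 10 * δ ^ 2) * (1 - 10 * δ ^ 2) :=
      mul_lt_mul_of_pos_right hny' h10
    nlinarith [t1, t2, hy2, hδ4]


set_option maxHeartbeats 1600000 in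
/-- There are `C > 0` and `b₀ > 1` such that for all `b ≥ b₀` and uniformly for
all `0 ≤ i < L`, the omitted area at the extreme points satisfies
`X(q̃_i, ũ_i) ≤ C / (b (log b)³)`. -/
theorem omitted_area_extreme_bound :
    ∃ C > (0 : ℝ), ∃ b₀ : ℝ, 1 < b₀ ∧
      ∀ b : ℝ, b₀ ≤ b → ∀ o : Plane, ∀ i : ℕ, i < L b →
        X o (qtil o b i) (util o b i) ≤ C / (b * (Real.log b) ^ 3) := by
  refine ⟨80, by norm_num, Real.exp 100, ?_, ?_⟩
  · have h := Real.add_one_le_exp (100:ℝ); linarith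
  intro b hb o i hi
  have hexp : (101:ℝ) ≤ Real.exp 100 := by have := Real.add_one_le_exp (100:ℝ); linarith
  have hb1 : (1:ℝ) < b := by linarith
  have hb0 : (0:ℝ) < b := by linarith
  have hlog : (100:ℝ) ≤ Real.log b := by
    have h := Real.log_le_log (Real.exp_pos 100) hb
    rwa [Real.log_exp] at h
  have hB1 : (1:ℝ) ≤ b ^ (1/3:ℝ) := by
    have h := Real.rpow_le_rpow (by norm_num : (0:ℝ) ≤ 1) hb1.le (by norm_num : (0:ℝ) ≤ 1/3)
    rwa [Real.one_rpow] at h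
  have hB : (100:ℝ) ≤ b ^ (1/3:ℝ) * Real.log b := by nlinarith
  have hB0 : (0:ℝ) < b ^ (1/3:ℝ) * Real.log b := by linarith
  have hδdef : δ b = 1 / (b ^ (1/3:ℝ) * Real.log b) := rfl
  have hδ0 : 0 < δ b := by rw [hδdef]; positivity
  have hδsmall : δ b ≤ 1/100 := by
    rw [hδdef]
    rw [div_le_div_iff₀ hB0 (by norm_num)]
    linarith
  -- L bounds
  have hL0 : 0 < L b := lt_of_le_of_lt (Nat.zero_le i) hi
  have hLpos : (0:ℝ) < (L b : ℝ) := by exact_mod_cast hL0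
  have hLlb : Real.pi * (b ^ (1/3:ℝ) * Real.log b) ≤ (L b : ℝ) := by
    have hfl := Nat.lt_floor_add_one (b ^ (1/3:ℝ) * (Real.log b) ^ 2)
    have hge : Real.pi * (b ^ (1/3:ℝ) * Real.log b) + 1 ≤ b ^ (1/3:ℝ) * (Real.log b) ^ 2 := by
      nlinarith [Real.pi_le_four, mul_le_mul_of_nonneg_left hlog hB0.le]
    have hLdef : (L b : ℝ) = (⌊b ^ (1/3:ℝ) * (Real.log b) ^ 2⌋₊ : ℝ) := rfl
    rw [hLdef]
    linarith
  have hθ0 : 0 < θb b := div_pos Real.pi_pos hLpos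
  have hθδ : θb b ≤ δ b := by
    have h1 : θb b ≤ Real.pi / (Real.pi * (b ^ (1/3:ℝ) * Real.log b)) := by
      unfold θb
      gcongr
    have h2 : Real.pi / (Real.pi * (b ^ (1/3:ℝ) * Real.log b))
        = 1 / (b ^ (1/3:ℝ) * Real.log b) := by
      rw [div_mul_eq_div_div, div_self (ne_of_gt Real.pi_pos)]
    rw [hδdef, ← h2]
    exact h1
  have hθπ : θb b ≤ Real.pi := by
    have h1 : (1:ℝ) ≤ (L b : ℝ) := by exact_mod_cast hL0
    have h := div_le_div_of_nonneg_left Real.pi_pos.le one_pos h1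
    unfold θb
    rw [div_one] at h
    exact h
  have hs0 : 0 ≤ Real.sin (θb b / 2) :=
    Real.sin_nonneg_of_nonneg_of_le_pi (by linarith) (by linarith [Real.pi_pos])
  have hsle : Real.sin (θb b / 2) ≤ δ b / 2 :=
    le_trans (Real.sin_le (by linarith)) (by linarith)
  have hcge : 1/2 ≤ Real.cos (θb b / 2) := by
    have h1 := Real.one_sub_sq_div_two_le_cos (x := θb b / 2)
    nlinarith [hθ0, hθδ, hδsmall]
  have hcs : Real.sin (θb b / 2) ^ 2 + Real.cos (θb b / 2) ^ 2 = 1 := Real.sin_sq_add_cos_sq _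
  set ψ : ℝ := (i : ℝ) * θb b with hψdef
  have hψpy : Real.sin ψ ^ 2 + Real.cos ψ ^ 2 = 1 := Real.sin_sq_add_cos_sq ψ
  have hαeq : ((i:ℝ) - 1/2) * θb b = ψ - θb b / 2 := by rw [hψdef]; ring
  have hβeq : ((i:ℝ) + 1/2) * θb b = ψ + θb b / 2 := by rw [hψdef]; ring
  have hcosα : Real.cos (((i:ℝ) - 1/2) * θb b)
      = Real.cos ψ * Real.cos (θb b / 2) + Real.sin ψ * Real.sin (θb b / 2) := by
    rw [hαeq, Real.cos_sub]
  have hsinα : Real.sin (((i:ℝ) - 1/2) * θb b)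
      = Real.sin ψ * Real.cos (θb b / 2) - Real.cos ψ * Real.sin (θb b / 2) := by
    rw [hαeq, Real.sin_sub]
  have hcosγ : Real.cos (((i:ℝ) + 1/2) * θb b + Real.pi)
      = -(Real.cos ψ * Real.cos (θb b / 2) - Real.sin ψ * Real.sin (θb b / 2)) := by
    rw [Real.cos_add_pi, hβeq, Real.cos_add]
  have hsinγ : Real.sin (((i:ℝ) + 1/2) * θb b + Real.pi)
      = -(Real.sin ψ * Real.cos (θb b / 2) + Real.cos ψ * Real.sin (θb b / 2)) := by
    rw [Real.sin_add_pi, hβeq, Real.sin_add]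
  set S₁ : Set Plane :=
    {z | z 0 ∈ Icc (-(2 * δ b)) (2 * δ b) ∧ z 1 ∈ Icc (1 - 10 * δ b ^ 2) 1} with hS₁
  set S₂ : Set Plane :=
    {z | z 0 ∈ Icc (-(2 * δ b)) (2 * δ b) ∧ z 1 ∈ Icc (-1) (-(1 - 10 * δ b ^ 2))} with hS₂
  have hsub : D o 1 \ (D (qtil o b i) 1 ∪ D (util o b i) 1)
      ⊆ (fun p => (rotIso ψ).symm (p - o)) ⁻¹' (S₁ ∪ S₂) := by
    rintro p ⟨hpo, hpqu⟩
    have hq : 1 < dist p (qtil o b i) := by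
      by_contra hcon; push_neg at hcon
      exact hpqu (Or.inl hcon)
    have hu : 1 < dist p (util o b i) := by
      by_contra hcon; push_neg at hcon
      exact hpqu (Or.inr hcon)
    have hpo' : dist p o ≤ 1 := hpo
    have hXY : (p 0 - o 0) ^ 2 + (p 1 - o 1) ^ 2 ≤ 1 := by
      have h := pow_le_one₀ (dist_nonneg (x := p) (y := o)) hpo' (n := 2)
      rw [dist_sq p o] at h
      exact h
    have hA : 1 < ((p 0 - o 0) - δ b * (Real.cos ψ * Real.cos (θb b / 2)
          + Real.sin ψ * Real.sin (θb b / 2))) ^ 2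
        + ((p 1 - o 1) - δ b * (Real.sin ψ * Real.cos (θb b / 2)
          - Real.cos ψ * Real.sin (θb b / 2))) ^ 2 := by
      have h0 : qtil o b i 0 = o 0 + δ b * Real.cos (((i:ℝ) - 1/2) * θb b) :=
        polarPt_apply_zero _ _ _
      have h1 : qtil o b i 1 = o 1 + δ b * Real.sin (((i:ℝ) - 1/2) * θb b) :=
        polarPt_apply_one _ _ _
      calc (1:ℝ) < dist p (qtil o b i) ^ 2 := one_lt_pow₀ hq two_ne_zero
        _ = _ := by rw [dist_sq p (qtil o b i), h0, h1, hcosα, hsinα]; ring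
    have hB : 1 < ((p 0 - o 0) + δ b * (Real.cos ψ * Real.cos (θb b / 2)
          - Real.sin ψ * Real.sin (θb b / 2))) ^ 2
        + ((p 1 - o 1) + δ b * (Real.sin ψ * Real.cos (θb b / 2)
          + Real.cos ψ * Real.sin (θb b / 2))) ^ 2 := by
      have h0 : util o b i 0 = o 0 + δ b * Real.cos (((i:ℝ) + 1/2) * θb b + Real.pi) :=
        polarPt_apply_zero _ _ _
      have h1 : util o b i 1 = o 1 + δ b * Real.sin (((i:ℝ) + 1/2) * θb b + Real.pi) :=
        polarPt_apply_one _ _ _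
      calc (1:ℝ) < dist p (util o b i) ^ 2 := one_lt_pow₀ hu two_ne_zero
        _ = _ := by rw [dist_sq p (util o b i), h0, h1, hcosγ, hsinγ]; ring
    have hkey := key_alg (δ b) (Real.cos ψ) (Real.sin ψ) (Real.cos (θb b / 2))
      (Real.sin (θb b / 2)) (p 0 - o 0) (p 1 - o 1)
      (Real.cos ψ * (p 0 - o 0) + Real.sin ψ * (p 1 - o 1))
      (-(Real.sin ψ * (p 0 - o 0)) + Real.cos ψ * (p 1 - o 1))
      hψpy hcs hδ0 hδsmall hs0 hsle hcge rfl rfl hXY hA hB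
    have hT0 : ((rotIso ψ).symm (p - o)) 0
        = Real.cos ψ * (p 0 - o 0) + Real.sin ψ * (p 1 - o 1) := by
      simp [rotIso_symm_apply, PiLp.sub_apply]
    have hT1 : ((rotIso ψ).symm (p - o)) 1
        = -(Real.sin ψ * (p 0 - o 0)) + Real.cos ψ * (p 1 - o 1) := by
      simp [rotIso_symm_apply, PiLp.sub_apply]
    rcases hkey with ⟨⟨hx1, hx2⟩, hy⟩
    rcases hy with ⟨hy1, hy2⟩ | ⟨hy1, hy2⟩
    · refine Or.inl ?_
      rw [hS₁]
      simp only [Set.mem_setOf_eq, Set.mem_Icc, hT0, hT1]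
      exact ⟨⟨hx1, hx2⟩, hy1, hy2⟩
    · refine Or.inr ?_
      rw [hS₂]
      simp only [Set.mem_setOf_eq, Set.mem_Icc, hT0, hT1]
      exact ⟨⟨hx1, hx2⟩, hy1, hy2⟩
  have hSm : MeasurableSet (S₁ ∪ S₂) := by
    rw [hS₁, hS₂]
    exact (measurableSet_box _ _ _ _).union (measurableSet_box _ _ _ _)
  have hmp : MeasurePreserving (fun p : Plane => (rotIso ψ).symm (p - o)) volume volume :=
    ((rotIso ψ).symm.measurePreserving).comp (measurePreserving_sub_right volume o)
  have hn1 : (0:ℝ) ≤ 4 * δ b := by linarith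
  have hn2 : (0:ℝ) ≤ 10 * δ b ^ 2 := by positivity
  have hvol : volume (D o 1 \ (D (qtil o b i) 1 ∪ D (util o b i) 1))
      ≤ ENNReal.ofReal (80 * δ b ^ 3) := by
    calc volume (D o 1 \ (D (qtil o b i) 1 ∪ D (util o b i) 1))
        ≤ volume ((fun p => (rotIso ψ).symm (p - o)) ⁻¹' (S₁ ∪ S₂)) := measure_mono hsub
      _ = volume (S₁ ∪ S₂) := hmp.measure_preimage hSm.nullMeasurableSet
      _ ≤ volume S₁ + volume S₂ := measure_union_le _ _
      _ = ENNReal.ofReal (2 * δ b - -(2 * δ b)) * ENNReal.ofReal (1 - (1 - 10 * δ b ^ 2))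
          + ENNReal.ofReal (2 * δ b - -(2 * δ b))
            * ENNReal.ofReal (-(1 - 10 * δ b ^ 2) - -1) := by
          rw [hS₁, hS₂, volume_box, volume_box]
      _ ≤ ENNReal.ofReal (80 * δ b ^ 3) := by
          rw [show 2 * δ b - -(2 * δ b) = 4 * δ b by ring,
            show 1 - (1 - 10 * δ b ^ 2) = 10 * δ b ^ 2 by ring,
            show -(1 - 10 * δ b ^ 2) - -1 = 10 * δ b ^ 2 by ring,
            ← ENNReal.ofReal_mul hn1,
            ← ENNReal.ofReal_add (mul_nonneg hn1 hn2) (mul_nonneg hn1 hn2)]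
          exact ENNReal.ofReal_le_ofReal (le_of_eq (by ring))
  have htoReal : X o (qtil o b i) (util o b i) ≤ 80 * δ b ^ 3 :=
    ENNReal.toReal_le_of_le_ofReal (by positivity) hvol
  have hfin : 80 * δ b ^ 3 = 80 / (b * Real.log b ^ 3) := by
    rw [hδdef, div_pow, one_pow, mul_pow]
    rw [show (b ^ (1/3:ℝ)) ^ (3:ℕ) = b from by
      rw [← Real.rpow_natCast (b ^ (1/3:ℝ)) 3, ← Real.rpow_mul hb0.le]
      norm_num]
    ring
  rw [← hfin]
  exact htoReal
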